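/- arXiv:1309.6095 — 2 statements merged into one kernel-verified Lean document; each statement's English description precedes it below -/
import Mathlib

section
/- Let X be a compact metric space with a continuous action T of a countable amenable group G, and let x₀ ∈ X have dense orbit: closure of {T^g x₀ : g ∈ G} equals X. Then x₀ is quasi-generic for every ergodic T-invariant Borel probability measure μ on X: there exists a left Følner sequence (F_N) such that for every f ∈ C(X), (1/|F_N|) Σ_{g ∈ F_N} f(T^g x₀) → ∫ f dμ. -/
open MeasureTheory Filter Topology
open scoped symmDiff

/-- A left Følner sequence of finite subsets of a group. -/
def IsFolner {G : Type*} [Group G] [DecidableEq G] (F : ℕ → Finset G) : Prop :=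
  (∀ N, (F N).Nonempty) ∧ ∀ g : G,
    Tendsto (fun N => (((((F N).image (fun x => g * x))) ∆ (F N)).card : ℝ) / (F N).card)
      atTop (𝓝 0)

set_option linter.unusedSectionVars false

namespace QuasiGenericAux

open TopologicalSpace
open scoped RealInnerProductSpace

variable {G : Type*} [Group G] [Countable G] [DecidableEq G]
variable {X : Type*} [MetricSpace X] [CompactSpace X] [MeasurableSpace X] [BorelSpace X]
variable {T : G → X → X} {μ : Measure X} [IsProbabilityMeasure μ]

section U

variable (hinv : ∀ g : G, MeasurePreserving (T g) μ μ)

/-- Koopman operator on `L²`. -/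
noncomputable def U (g : G) : Lp ℝ 2 μ →+ Lp ℝ 2 μ :=
  Lp.compMeasurePreserving (T g) (hinv g)

lemma U_coeFn (g : G) (v : Lp ℝ 2 μ) : ⇑(U hinv g v) =ᵐ[μ] ⇑v ∘ T g :=
  Lp.coeFn_compMeasurePreserving v (hinv g)

lemma U_norm (g : G) (v : Lp ℝ 2 μ) : ‖U hinv g v‖ = ‖v‖ :=
  Lp.norm_compMeasurePreserving v (hinv g)

lemma U_smul (g : G) (c : ℝ) (v : Lp ℝ 2 μ) : U hinv g (c • v) = c • U hinv g v := by
  refine Lp.ext ?_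
  have h1 := U_coeFn hinv g (c • v)
  have h2 : ⇑(c • v) ∘ T g =ᵐ[μ] (c • ⇑v) ∘ T g :=
    (hinv g).quasiMeasurePreserving.ae_eq_comp (Lp.coeFn_smul c v)
  have h3 := Lp.coeFn_smul c (U hinv g v)
  have h4 := U_coeFn hinv g v
  filter_upwards [h1, h2, h3, h4] with x hx1 hx2 hx3 hx4
  simp only [Function.comp_apply] at *
  rw [hx1, hx2, hx3, Pi.smul_apply, Pi.smul_apply, hx4]

lemma U_comp (hact : ∀ g g' x, T (g * g') x = T g (T g' x)) (s g : G) (v : Lp ℝ 2 μ) :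
    U hinv s (U hinv g v) = U hinv (g * s) v := by
  refine Lp.ext ?_
  have h1 := U_coeFn hinv s (U hinv g v)
  have h2 : ⇑(U hinv g v) ∘ T s =ᵐ[μ] (⇑v ∘ T g) ∘ T s :=
    (hinv s).quasiMeasurePreserving.ae_eq_comp (U_coeFn hinv g v)
  have h3 := U_coeFn hinv (g * s) v
  filter_upwards [h1, h2, h3] with x hx1 hx2 hx3
  rw [hx1, hx2, hx3]
  simp [Function.comp, hact]

/-- averaging operator over a finite subset of the group -/
noncomputable def A (F : Finset G) (v : Lp ℝ 2 μ) : Lp ℝ 2 μ :=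
  (F.card : ℝ)⁻¹ • ∑ g ∈ F, U hinv g v

lemma A_add (F : Finset G) (v w : Lp ℝ 2 μ) :
    A hinv F (v + w) = A hinv F v + A hinv F w := by
  simp only [A, map_add, Finset.sum_add_distrib, smul_add]

lemma A_smul (F : Finset G) (c : ℝ) (v : Lp ℝ 2 μ) :
    A hinv F (c • v) = c • A hinv F v := by
  simp only [A, U_smul]
  rw [← Finset.smul_sum, smul_comm]

lemma A_zero (F : Finset G) : A hinv F (0 : Lp ℝ 2 μ) = 0 := by
  simp [A]

lemma A_norm_le (F : Finset G) (v : Lp ℝ 2 μ) : ‖A hinv F v‖ ≤ ‖v‖ := by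
  rcases Finset.eq_empty_or_nonempty F with rfl | hF
  · simp [A]
  have hcard : (0:ℝ) < F.card := by exact_mod_cast Finset.card_pos.mpr hF
  calc ‖A hinv F v‖ = (F.card : ℝ)⁻¹ * ‖∑ g ∈ F, U hinv g v‖ := by
        rw [A, norm_smul, Real.norm_eq_abs, abs_of_nonneg (by positivity)]
    _ ≤ (F.card : ℝ)⁻¹ * (F.card * ‖v‖) := by
        refine mul_le_mul_of_nonneg_left ?_ (by positivity)
        calc ‖∑ g ∈ F, U hinv g v‖ ≤ ∑ g ∈ F, ‖U hinv g v‖ := norm_sum_le _ _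
          _ = ∑ _g ∈ F, ‖v‖ := by simp [U_norm]
          _ = F.card * ‖v‖ := by simp [Finset.sum_const, nsmul_eq_mul]
    _ = ‖v‖ := by field_simp

lemma A_sub (F : Finset G) (v w : Lp ℝ 2 μ) :
    A hinv F (v - w) = A hinv F v - A hinv F w := by
  have := A_add hinv F (v - w) w
  simp only [sub_add_cancel] at this
  rw [this]; abel

lemma A_image (hact : ∀ g g' x, T (g * g') x = T g (T g' x)) (g : G) (F : Finset G)
    (v : Lp ℝ 2 μ) :
    A hinv F (U hinv g v) = ((F.card : ℝ))⁻¹ • ∑ t ∈ F.image (fun x => g * x), U hinv t v := by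
  rw [A, Finset.sum_image (fun a _ b _ h => mul_left_cancel h)]
  congr 1
  exact Finset.sum_congr rfl fun s _ => U_comp hinv hact s g v

lemma A_folner_bound (hact : ∀ g g' x, T (g * g') x = T g (T g' x)) (g : G) (F : Finset G)
    (v : Lp ℝ 2 μ) :
    ‖A hinv F v - A hinv F (U hinv g v)‖ ≤
      (((F.image (fun x => g * x)) ∆ F).card : ℝ) / F.card * ‖v‖ := by
  rcases Finset.eq_empty_or_nonempty F with rfl | hF
  · simp [A]
  have hcard : (0:ℝ) < F.card := by exact_mod_cast Finset.card_pos.mpr hF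
  set F' := F.image (fun x => g * x) with hF'
  have key : A hinv F v - A hinv F (U hinv g v) =
      (F.card : ℝ)⁻¹ • (∑ t ∈ F \ F', U hinv t v - ∑ t ∈ F' \ F, U hinv t v) := by
    rw [A_image hinv hact, A, ← smul_sub]
    congr 1
    exact Finset.sum_sdiff_sub_sum_sdiff.symm
  rw [key, norm_smul, Real.norm_eq_abs, abs_of_nonneg (by positivity)]
  have hbound : ‖∑ t ∈ F \ F', U hinv t v - ∑ t ∈ F' \ F, U hinv t v‖ ≤
      ((F' ∆ F).card : ℝ) * ‖v‖ := by
    have h1 : ‖∑ t ∈ F \ F', U hinv t v‖ ≤ ((F \ F').card : ℝ) * ‖v‖ := by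
      calc ‖∑ t ∈ F \ F', U hinv t v‖ ≤ ∑ t ∈ F \ F', ‖U hinv t v‖ := norm_sum_le _ _
        _ = ((F \ F').card : ℝ) * ‖v‖ := by simp [U_norm, Finset.sum_const, nsmul_eq_mul]
    have h2 : ‖∑ t ∈ F' \ F, U hinv t v‖ ≤ ((F' \ F).card : ℝ) * ‖v‖ := by
      calc ‖∑ t ∈ F' \ F, U hinv t v‖ ≤ ∑ t ∈ F' \ F, ‖U hinv t v‖ := norm_sum_le _ _
        _ = ((F' \ F).card : ℝ) * ‖v‖ := by simp [U_norm, Finset.sum_const, nsmul_eq_mul]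
    have hcardsum : ((F' ∆ F).card : ℝ) = ((F' \ F).card : ℝ) + ((F \ F').card : ℝ) := by
      rw [symmDiff_def, Finset.sup_eq_union,
        Finset.card_union_of_disjoint (disjoint_sdiff_sdiff : Disjoint (F' \ F) (F \ F'))]
      push_cast; ring
    calc ‖∑ t ∈ F \ F', U hinv t v - ∑ t ∈ F' \ F, U hinv t v‖
        ≤ ‖∑ t ∈ F \ F', U hinv t v‖ + ‖∑ t ∈ F' \ F, U hinv t v‖ := norm_sub_le _ _
      _ ≤ ((F \ F').card : ℝ) * ‖v‖ + ((F' \ F).card : ℝ) * ‖v‖ := add_le_add h1 h2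
      _ = ((F' ∆ F).card : ℝ) * ‖v‖ := by rw [hcardsum]; ring
  calc (F.card : ℝ)⁻¹ * ‖∑ t ∈ F \ F', U hinv t v - ∑ t ∈ F' \ F, U hinv t v‖
      ≤ (F.card : ℝ)⁻¹ * (((F' ∆ F).card : ℝ) * ‖v‖) :=
        mul_le_mul_of_nonneg_left hbound (by positivity)
    _ = ((F' ∆ F).card : ℝ) / F.card * ‖v‖ := by ring

/-- The closed subspace generated by coboundaries. -/
noncomputable def Sc : Submodule ℝ (Lp ℝ 2 μ) :=
  (Submodule.span ℝ {w : Lp ℝ 2 μ | ∃ v g, w = v - U hinv g v}).topologicalClosure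

lemma tendsto_A_zero_of_mem_Sc (hact : ∀ g g' x, T (g * g') x = T g (T g' x))
    {F : ℕ → Finset G} (hF : IsFolner F) {w : Lp ℝ 2 μ} (hw : w ∈ Sc hinv) :
    Tendsto (fun N => A hinv (F N) w) atTop (𝓝 0) := by
  -- first, on the span
  have hspan : ∀ w ∈ Submodule.span ℝ {w : Lp ℝ 2 μ | ∃ v g, w = v - U hinv g v},
      Tendsto (fun N => A hinv (F N) w) atTop (𝓝 0) := by
    intro w hw
    induction hw using Submodule.span_induction with
    | mem w hw =>
      obtain ⟨v, g, rfl⟩ := hw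
      rw [tendsto_zero_iff_norm_tendsto_zero]
      have hbd : ∀ N, ‖A hinv (F N) (v - U hinv g v)‖ ≤
          ((((F N).image (fun x => g * x)) ∆ (F N)).card : ℝ) / (F N).card * ‖v‖ := by
        intro N
        rw [A_sub]
        exact A_folner_bound hinv hact g (F N) v
      have hlim : Tendsto (fun N =>
          ((((F N).image (fun x => g * x)) ∆ (F N)).card : ℝ) / (F N).card * ‖v‖)
          atTop (𝓝 0) := by
        simpa using (hF.2 g).mul_const ‖v‖
      refine squeeze_zero (fun N => norm_nonneg _) hbd hlim
    | zero =>
      simp only [A_zero]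
      exact tendsto_const_nhds
    | add w₁ w₂ _ _ h1 h2 =>
      have := h1.add h2
      simp only [add_zero] at this
      refine this.congr fun N => (A_add hinv (F N) w₁ w₂).symm
    | smul c w _ h =>
      have := h.const_smul c
      simp only [smul_zero] at this
      refine this.congr fun N => (A_smul hinv (F N) c w).symm
  -- now pass to the closure
  rw [Metric.tendsto_atTop]
  intro ε hε
  have hw' : w ∈ closure ((Submodule.span ℝ {w : Lp ℝ 2 μ | ∃ v g, w = v - U hinv g v} :
      Submodule ℝ (Lp ℝ 2 μ)) : Set (Lp ℝ 2 μ)) := hw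
  obtain ⟨w', hw'mem, hw'close⟩ := Metric.mem_closure_iff.mp hw' (ε/2) (by linarith)
  obtain ⟨N₀, hN₀⟩ := (Metric.tendsto_atTop.mp (hspan w' hw'mem)) (ε/2) (by linarith)
  refine ⟨N₀, fun N hN => ?_⟩
  rw [dist_zero_right]
  have h1 : ‖A hinv (F N) (w - w')‖ ≤ ‖w - w'‖ := A_norm_le hinv (F N) _
  have h2 : ‖A hinv (F N) w'‖ < ε/2 := by
    have := hN₀ N hN
    rwa [dist_zero_right] at this
  have h3 : ‖w - w'‖ < ε/2 := by
    have := hw'close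
    rwa [dist_eq_norm] at this
  calc ‖A hinv (F N) w‖ = ‖A hinv (F N) (w - w') + A hinv (F N) w'‖ := by
        rw [← A_add, sub_add_cancel]
    _ ≤ ‖A hinv (F N) (w - w')‖ + ‖A hinv (F N) w'‖ := norm_add_le _ _
    _ < ε/2 + ε/2 := by
        refine add_lt_add_of_le_of_lt (le_trans h1 h3.le) h2
    _ = ε := by ring

lemma U_eq_self_of_mem_orthogonal {u : Lp ℝ 2 μ} (hu : u ∈ (Sc hinv)ᗮ) (g : G) :
    U hinv g u = u := by
  have hgen : u - U hinv g u ∈ Sc hinv :=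
    Submodule.le_topologicalClosure _ (Submodule.subset_span ⟨u, g, rfl⟩)
  have h0 : (inner ℝ (u - U hinv g u) u : ℝ) = 0 := by
    have := (Submodule.mem_orthogonal _ u).mp hu _ hgen
    exact this
  have hinner : (inner ℝ u (U hinv g u) : ℝ) = ‖u‖^2 := by
    have h1 : (inner ℝ u u : ℝ) - (inner ℝ (U hinv g u) u : ℝ) = 0 := by
      rw [← inner_sub_left]; exact h0
    have h2 : (inner ℝ (U hinv g u) u : ℝ) = (inner ℝ u (U hinv g u) : ℝ) := real_inner_comm _ _
    rw [h2] at h1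
    rw [← real_inner_self_eq_norm_sq]
    linarith
  have hnorm : ‖u - U hinv g u‖^2 = 0 := by
    rw [norm_sub_sq_real, hinner, U_norm]
    ring
  have : u - U hinv g u = 0 := by
    have := pow_eq_zero_iff (n := 2) (by norm_num) |>.mp hnorm
    exact norm_eq_zero.mp this
  exact (sub_eq_zero.mp this).symm


/-- The constant function `1` as an element of `L²`. -/
noncomputable def oneL (μ : Measure X) [IsProbabilityMeasure μ] : Lp ℝ 2 μ :=
  MemLp.toLp (fun _ => (1:ℝ)) (memLp_const 1)

lemma oneL_coeFn : ⇑(oneL μ) =ᵐ[μ] fun _ => (1:ℝ) := MemLp.coeFn_toLp _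

lemma inner_eq_integral (u v : Lp ℝ 2 μ) : (inner ℝ u v : ℝ) = ∫ x, u x * v x ∂μ := by
  rw [MeasureTheory.L2.inner_def]; simp [RCLike.inner_apply']
  exact integral_congr_ae (Eventually.of_forall fun _ => mul_comm _ _)

lemma integral_U (g : G) (v : Lp ℝ 2 μ) : ∫ x, (U hinv g v) x ∂μ = ∫ x, v x ∂μ := by
  have h1 : ∫ x, (U hinv g v) x ∂μ = ∫ x, v (T g x) ∂μ :=
    integral_congr_ae (U_coeFn hinv g v)
  have hm : AEStronglyMeasurable (⇑v) (Measure.map (T g) μ) := by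
    rw [(hinv g).map_eq]; exact Lp.aestronglyMeasurable v
  have h2 : ∫ x, v (T g x) ∂μ = ∫ y, v y ∂μ := by
    rw [← MeasureTheory.integral_map (hinv g).measurable.aemeasurable hm, (hinv g).map_eq]
  rw [h1, h2]

lemma inner_oneL_right (v : Lp ℝ 2 μ) : (inner ℝ v (oneL μ) : ℝ) = ∫ x, v x ∂μ := by
  rw [inner_eq_integral]
  refine integral_congr_ae ?_
  filter_upwards [oneL_coeFn (μ := μ)] with x hx
  rw [hx, mul_one]

lemma oneL_mem_orthogonal : oneL μ ∈ (Sc hinv)ᗮ := by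
  rw [Submodule.mem_orthogonal]
  intro w hw
  have hclosed : IsClosed {w : Lp ℝ 2 μ | (inner ℝ w (oneL μ) : ℝ) = 0} :=
    isClosed_eq (continuous_id.inner continuous_const) continuous_const
  have hsub : ((Submodule.span ℝ {w : Lp ℝ 2 μ | ∃ v g, w = v - U hinv g v} :
      Submodule ℝ (Lp ℝ 2 μ)) : Set (Lp ℝ 2 μ)) ⊆
      {w : Lp ℝ 2 μ | (inner ℝ w (oneL μ) : ℝ) = 0} := by
    intro w hw
    induction hw using Submodule.span_induction with
    | mem w hw =>
      obtain ⟨v, g, rfl⟩ := hw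
      show (inner ℝ (v - U hinv g v) (oneL μ) : ℝ) = 0
      rw [inner_sub_left, inner_oneL_right, inner_oneL_right, integral_U]
      ring
    | zero => exact inner_zero_left _
    | add x y _ _ hx hy =>
      show (inner ℝ (x + y) (oneL μ) : ℝ) = 0
      rw [inner_add_left, hx, hy, add_zero]
    | smul c x _ hx =>
      show (inner ℝ (c • x) (oneL μ) : ℝ) = 0
      rw [real_inner_smul_left, hx, mul_zero]
  have : w ∈ closure {w : Lp ℝ 2 μ | (inner ℝ w (oneL μ) : ℝ) = 0} :=
    closure_mono hsub hw
  rwa [hclosed.closure_eq] at this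

include hinv in
lemma invariant_ae_const (hcont : ∀ g, Continuous (T g))
    (hact : ∀ g g' x, T (g * g') x = T g (T g' x)) (hid : ∀ x, T 1 x = x)
    (herg : ∀ s : Set X, MeasurableSet s → (∀ g, T g ⁻¹' s = s) → μ s = 0 ∨ μ s = 1)
    (u : Lp ℝ 2 μ) (hu : ∀ g, ⇑u =ᵐ[μ] ⇑u ∘ T g) :
    ∃ c : ℝ, ⇑u =ᵐ[μ] fun _ => c := by
  classical
  have hmeas := Lp.aestronglyMeasurable u
  set u' : X → ℝ := hmeas.mk u with hu'def
  have hsm : StronglyMeasurable u' := hmeas.stronglyMeasurable_mk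
  have hae : ⇑u =ᵐ[μ] u' := hmeas.ae_eq_mk
  have hinvg : ∀ g, u' =ᵐ[μ] u' ∘ T g := fun g =>
    hae.symm.trans ((hu g).trans ((hinv g).quasiMeasurePreserving.ae_eq_comp hae))
  set s : ℚ → Set X := fun q => {x | (q:ℝ) < u' x} with hsdef
  have hms : ∀ q, MeasurableSet (s q) := fun q => hsm.measurable measurableSet_Ioi
  have hnull : ∀ (g : G) (q : ℚ), μ ((T g ⁻¹' (s q)) ∆ (s q)) = 0 := by
    intro g q
    have hne : μ {x | ¬ (u' x = u' (T g x))} = 0 := by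
      have := hinvg g
      rw [Filter.EventuallyEq, MeasureTheory.ae_iff] at this
      exact this
    refine measure_mono_null ?_ hne
    intro x hx
    rw [Set.mem_symmDiff] at hx
    rcases hx with ⟨hx1, hx2⟩ | ⟨hx1, hx2⟩
    · simp only [Set.mem_preimage, hsdef, Set.mem_setOf_eq] at hx1 hx2
      intro h
      exact hx2 (by rw [h]; exact hx1)
    · simp only [Set.mem_preimage, hsdef, Set.mem_setOf_eq] at hx1 hx2
      intro h
      exact hx2 (by rw [← h]; exact hx1)
  set w : ℚ → Set X := fun q => ⋃ g : G, T g ⁻¹' (s q) with hwdef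
  have hwm : ∀ q, MeasurableSet (w q) := fun q =>
    MeasurableSet.iUnion fun g => (hcont g).measurable (hms q)
  have hwsub : ∀ q, s q ⊆ w q := by
    intro q x hx
    refine Set.mem_iUnion.mpr ⟨1, ?_⟩
    rw [Set.mem_preimage, hid]
    exact hx
  have hwinv : ∀ q (h : G), T h ⁻¹' (w q) = w q := by
    intro q h
    rw [hwdef]
    simp only [Set.preimage_iUnion]
    have h1 : ∀ g : G, T h ⁻¹' (T g ⁻¹' (s q)) = T (g * h) ⁻¹' (s q) := by
      intro g
      ext x
      simp only [Set.mem_preimage, hact]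
    rw [Set.iUnion_congr h1]
    exact (Equiv.mulRight h).surjective.iUnion_comp (fun g => T g ⁻¹' (s q))
  have hweq : ∀ q, μ (s q) = μ (w q) := by
    intro q
    refine measure_congr ?_
    rw [MeasureTheory.ae_eq_set]
    constructor
    · rw [Set.diff_eq_empty.mpr (hwsub q)]
      simp
    · refine measure_mono_null ?_ (measure_iUnion_null fun g => hnull g q)
      intro x hx
      obtain ⟨hx1, hx2⟩ := hx
      obtain ⟨g, hg⟩ := Set.mem_iUnion.mp hx1
      refine Set.mem_iUnion.mpr ⟨g, ?_⟩
      rw [Set.mem_symmDiff]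
      exact Or.inl ⟨hg, hx2⟩
  have hdich : ∀ q, μ (s q) = 0 ∨ μ (s q) = 1 := fun q => by
    rw [hweq q]; exact herg (w q) (hwm q) (hwinv q)
  have hmono : ∀ {q q' : ℚ}, q ≤ q' → s q' ⊆ s q := by
    intro q q' hqq' x hx
    rw [hsdef, Set.mem_setOf_eq] at hx ⊢
    calc (q:ℝ) ≤ (q':ℝ) := by exact_mod_cast hqq'
      _ < u' x := hx
  -- there is a rational where the measure is zero
  have hex0 : ∃ n : ℕ, μ (s n) = 0 := by
    by_contra hcon
    push_neg at hcon
    have hall : ∀ n : ℕ, μ (s n) = 1 := fun n => (hdich n).resolve_left (hcon n)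
    have hintm : μ (⋂ n : ℕ, s (n : ℚ)) = 1 := by
      have hcompl : μ (⋃ n : ℕ, (s (n : ℚ))ᶜ) = 0 :=
        measure_iUnion_null fun n => by
          rw [MeasureTheory.prob_compl_eq_zero_iff (hms _)]; exact hall n
      have : (⋂ n : ℕ, s (n : ℚ)) = (⋃ n : ℕ, (s (n : ℚ))ᶜ)ᶜ := by
        rw [Set.compl_iUnion]; simp
      rw [this, MeasureTheory.prob_compl_eq_one_iff (MeasurableSet.iUnion
        fun n => (hms _).compl)]
      exact hcompl
    have hempty : (⋂ n : ℕ, s (n : ℚ)) = ∅ := by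
      ext x
      simp only [Set.mem_iInter, Set.mem_empty_iff_false, iff_false]
      intro hx
      obtain ⟨n, hn⟩ := exists_nat_gt (u' x)
      have := hx n
      rw [hsdef, Set.mem_setOf_eq] at this
      push_cast at this
      linarith
    rw [hempty] at hintm
    simp at hintm
  -- there is a rational where the measure is one
  have hex1 : ∃ n : ℕ, μ (s (-(n:ℚ))) = 1 := by
    by_contra hcon
    push_neg at hcon
    have hall : ∀ n : ℕ, μ (s (-(n:ℚ))) = 0 := fun n => (hdich _).resolve_right (hcon n)
    have huniv : (⋃ n : ℕ, s (-(n:ℚ))) = Set.univ := by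
      ext x
      simp only [Set.mem_iUnion, Set.mem_univ, iff_true]
      obtain ⟨n, hn⟩ := exists_nat_gt (-(u' x))
      refine ⟨n, ?_⟩
      rw [hsdef, Set.mem_setOf_eq]
      push_cast
      linarith
    have : μ (⋃ n : ℕ, s (-(n:ℚ))) = 0 := measure_iUnion_null fun n => hall n
    rw [huniv] at this
    simp at this
  obtain ⟨n0, hn0⟩ := hex1
  set A : Set ℚ := {q : ℚ | μ (s q) = 0} with hAdef
  have hAne : ((fun q : ℚ => (q:ℝ)) '' A).Nonempty := by
    obtain ⟨n, hn⟩ := hex0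
    exact ⟨(n:ℝ), ⟨(n : ℚ), hn, by push_cast; ring⟩⟩
  have hAbdd : BddBelow ((fun q : ℚ => (q:ℝ)) '' A) := by
    refine ⟨-(n0:ℝ), ?_⟩
    rintro y ⟨q, hq, rfl⟩
    by_contra hlt
    push_neg at hlt
    have hqle : q ≤ -(n0:ℚ) := by exact_mod_cast hlt.le
    have : μ (s (-(n0:ℚ))) ≤ μ (s q) := measure_mono (hmono hqle)
    rw [hn0, hq] at this
    simp at this
  set c : ℝ := sInf ((fun q : ℚ => (q:ℝ)) '' A) with hcdef
  have hq_gt : ∀ q : ℚ, c < (q:ℝ) → μ (s q) = 0 := by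
    intro q hq
    obtain ⟨y, ⟨a, ha, rfl⟩, hy⟩ := exists_lt_of_csInf_lt hAne hq
    have haq : a ≤ q := by
      have h' : (a:ℝ) < (q:ℝ) := hy
      exact_mod_cast h'.le
    have : μ (s q) ≤ μ (s a) := measure_mono (hmono haq)
    rw [ha] at this
    exact le_antisymm this zero_le
  have hq_lt : ∀ q : ℚ, (q:ℝ) < c → μ (s q) = 1 := by
    intro q hq
    refine (hdich q).resolve_left ?_
    intro h0
    have : c ≤ (q:ℝ) := csInf_le hAbdd ⟨q, h0, rfl⟩
    linarith
  have hgt : μ {x | c < u' x} = 0 := by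
    refine measure_mono_null (fun x hx => ?_)
      (measure_iUnion_null (s := fun q : ℚ =>
        if c < (q:ℝ) then s q else (∅ : Set X)) fun q => ?_)
    · rw [Set.mem_setOf_eq] at hx
      obtain ⟨q, hq1, hq2⟩ := exists_rat_btwn hx
      refine Set.mem_iUnion.mpr ⟨q, ?_⟩
      show x ∈ if c < (q:ℝ) then s q else (∅ : Set X)
      rw [if_pos hq1]
      exact hq2
    · show μ (if c < (q:ℝ) then s q else (∅ : Set X)) = 0
      by_cases h : c < (q:ℝ)
      · rw [if_pos h]; exact hq_gt q h
      · rw [if_neg h]; simp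
  have hlt : μ {x | u' x < c} = 0 := by
    refine measure_mono_null (fun x hx => ?_)
      (measure_iUnion_null (s := fun q : ℚ =>
        if (q:ℝ) < c then {x | u' x < (q:ℝ)} else (∅ : Set X)) fun q => ?_)
    · rw [Set.mem_setOf_eq] at hx
      obtain ⟨q, hq1, hq2⟩ := exists_rat_btwn hx
      refine Set.mem_iUnion.mpr ⟨q, ?_⟩
      show x ∈ if (q:ℝ) < c then {x | u' x < (q:ℝ)} else (∅ : Set X)
      rw [if_pos hq2]
      exact hq1
    · show μ (if (q:ℝ) < c then {x | u' x < (q:ℝ)} else (∅ : Set X)) = 0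
      by_cases h : (q:ℝ) < c
      · rw [if_pos h]
        have h1 : μ (s q) = 1 := hq_lt q h
        refine measure_mono_null (fun x hx => ?_)
          ((MeasureTheory.prob_compl_eq_zero_iff (hms q)).mpr h1)
        rw [Set.mem_setOf_eq] at hx
        intro hmem
        rw [hsdef, Set.mem_setOf_eq] at hmem
        linarith
      · rw [if_neg h]; simp
  refine ⟨c, hae.trans ?_⟩
  have : μ {x | ¬ (u' x = c)} = 0 := by
    refine measure_mono_null (fun x hx => ?_) (measure_union_null hgt hlt)
    rw [Set.mem_setOf_eq] at hx
    rcases lt_or_gt_of_ne (Ne.symm (ne_comm.mp hx)) with h | h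
    · exact Or.inr h
    · exact Or.inl h
  rw [Filter.EventuallyEq, MeasureTheory.ae_iff]
  exact this

lemma mem_orthogonal_eq_const (hcont : ∀ g, Continuous (T g))
    (hact : ∀ g g' x, T (g * g') x = T g (T g' x)) (hid : ∀ x, T 1 x = x)
    (herg : ∀ s : Set X, MeasurableSet s → (∀ g, T g ⁻¹' s = s) → μ s = 0 ∨ μ s = 1)
    {u : Lp ℝ 2 μ} (hu : u ∈ (Sc hinv)ᗮ) :
    ∃ c : ℝ, u = c • oneL μ := by
  have hinv' : ∀ g, ⇑u =ᵐ[μ] ⇑u ∘ T g := by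
    intro g
    have h1 : U hinv g u = u := U_eq_self_of_mem_orthogonal hinv hu g
    have h2 := U_coeFn hinv g u
    rw [h1] at h2
    exact h2
  obtain ⟨c, hc⟩ := invariant_ae_const hinv hcont hact hid herg u hinv'
  refine ⟨c, Lp.ext ?_⟩
  refine hc.trans ?_
  have h1 := Lp.coeFn_smul c (oneL μ)
  filter_upwards [h1, oneL_coeFn (μ := μ)] with x hx1 hx2
  rw [hx1, Pi.smul_apply, hx2, smul_eq_mul, mul_one]

lemma U_oneL (g : G) : U hinv g (oneL μ) = oneL μ := by
  refine Lp.ext ?_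
  have h1 := U_coeFn hinv g (oneL μ)
  have h2 : ⇑(oneL μ) ∘ T g =ᵐ[μ] (fun _ => (1:ℝ)) ∘ T g :=
    (hinv g).quasiMeasurePreserving.ae_eq_comp (oneL_coeFn (μ := μ))
  filter_upwards [h1, h2, oneL_coeFn (μ := μ)] with x hx1 hx2 hx3
  rw [hx1, hx2, hx3]
  rfl

lemma A_oneL {F : Finset G} (hF : F.Nonempty) : A hinv F (oneL μ) = oneL μ := by
  have hcard : ((F.card : ℝ)) ≠ 0 := by
    have : (0:ℝ) < F.card := by exact_mod_cast Finset.card_pos.mpr hF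
    linarith
  rw [A]
  have : ∑ g ∈ F, U hinv g (oneL μ) = (F.card : ℝ) • oneL μ := by
    rw [Finset.sum_congr rfl fun g _ => U_oneL hinv g, Finset.sum_const,
      ← Nat.cast_smul_eq_nsmul ℝ]
  rw [this, smul_smul, inv_mul_cancel₀ hcard, one_smul]

lemma inner_oneL_oneL : (inner ℝ (oneL μ) (oneL μ) : ℝ) = 1 := by
  rw [inner_oneL_right]
  have : ∫ x, (oneL μ) x ∂μ = ∫ (_ : X), (1:ℝ) ∂μ := integral_congr_ae (oneL_coeFn (μ := μ))
  rw [this]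
  simp

lemma met (hcont : ∀ g, Continuous (T g))
    (hact : ∀ g g' x, T (g * g') x = T g (T g' x)) (hid : ∀ x, T 1 x = x)
    (herg : ∀ s : Set X, MeasurableSet s → (∀ g, T g ⁻¹' s = s) → μ s = 0 ∨ μ s = 1)
    {F : ℕ → Finset G} (hF : IsFolner F) (f : Lp ℝ 2 μ) :
    Tendsto (fun N => A hinv (F N) f) atTop
      (𝓝 ((inner ℝ (oneL μ) f : ℝ) • oneL μ)) := by
  set K := Sc hinv with hK
  haveI : CompleteSpace K :=
    (show IsClosed (K : Set (Lp ℝ 2 μ)) from Submodule.isClosed_topologicalClosure _).completeSpace_coe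
  have hdecomp : (K.orthogonalProjectionOnto f : Lp ℝ 2 μ) + (Kᗮ.orthogonalProjectionOnto f : Lp ℝ 2 μ) = f :=
    K.starProjection_add_starProjection_orthogonal f
  set a : Lp ℝ 2 μ := (K.orthogonalProjectionOnto f : Lp ℝ 2 μ) with hadef
  set b : Lp ℝ 2 μ := (Kᗮ.orthogonalProjectionOnto f : Lp ℝ 2 μ) with hbdef
  have ha : a ∈ K := (K.orthogonalProjectionOnto f).2
  have hb : b ∈ Kᗮ := (Kᗮ.orthogonalProjectionOnto f).2
  obtain ⟨c, hc⟩ := mem_orthogonal_eq_const hinv hcont hact hid herg hb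
  have hAb : ∀ N, A hinv (F N) b = b := by
    intro N
    rw [hc, A_smul, A_oneL hinv (hF.1 N)]
  have hsplit : ∀ N, A hinv (F N) f = A hinv (F N) a + b := by
    intro N
    rw [← hAb N, ← A_add, hdecomp]
  have htend : Tendsto (fun N => A hinv (F N) a + b) atTop (𝓝 (0 + b)) :=
    (tendsto_A_zero_of_mem_Sc hinv hact hF ha).add tendsto_const_nhds
  rw [zero_add] at htend
  have hchar : b = (inner ℝ (oneL μ) f : ℝ) • oneL μ := by
    have h1 : (inner ℝ (oneL μ) f : ℝ) = inner ℝ (oneL μ) a + inner ℝ (oneL μ) b := by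
      rw [← inner_add_right, hdecomp]
    have h2 : (inner ℝ (oneL μ) a : ℝ) = 0 := by
      have := (Submodule.mem_orthogonal K (oneL μ)).mp (oneL_mem_orthogonal hinv) a ha
      rw [real_inner_comm]
      exact this
    have h3 : (inner ℝ (oneL μ) b : ℝ) = c := by
      rw [hc, real_inner_smul_right, inner_oneL_oneL, mul_one]
    rw [h1, h2, h3, zero_add, hc]
  rw [← hchar]
  exact htend.congr fun N => (hsplit N).symm


lemma coeFn_finset_sum {ι : Type*} (s : Finset ι) (v : ι → Lp ℝ 2 μ) :
    ⇑(∑ i ∈ s, v i) =ᵐ[μ] fun x => ∑ i ∈ s, (v i) x := by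
  classical
  induction s using Finset.induction_on with
  | empty =>
    simp only [Finset.sum_empty]
    exact Lp.coeFn_zero ℝ 2 μ
  | @insert a s ha ih =>
    rw [Finset.sum_insert ha]
    filter_upwards [Lp.coeFn_add (v a) (∑ i ∈ s, v i), ih] with x hx1 hx2
    rw [hx1, Pi.add_apply, hx2, Finset.sum_insert ha]

lemma A_toLp_coeFn (hinv : ∀ g : G, MeasurePreserving (T g) μ μ) (f : C(X,ℝ)) (F : Finset G) :
    ⇑(A hinv F (ContinuousMap.toLp 2 μ ℝ f)) =ᵐ[μ]
      fun x => (F.card : ℝ)⁻¹ * ∑ g ∈ F, f (T g x) := by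
  have hU : ∀ g : G, ⇑(U hinv g (ContinuousMap.toLp 2 μ ℝ f)) =ᵐ[μ] fun x => f (T g x) := by
    intro g
    refine (U_coeFn hinv g _).trans ?_
    exact (hinv g).quasiMeasurePreserving.ae_eq_comp (ContinuousMap.coeFn_toLp (𝕜 := ℝ) μ f)
  have hall : ∀ᵐ x ∂μ, ∀ g ∈ (F : Set G),
      (U hinv g (ContinuousMap.toLp 2 μ ℝ f)) x = f (T g x) :=
    (MeasureTheory.ae_ball_iff F.countable_toSet).mpr (fun g _ => hU g)
  have hsmul := Lp.coeFn_smul ((F.card : ℝ))⁻¹ (∑ g ∈ F, U hinv g (ContinuousMap.toLp 2 μ ℝ f))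
  filter_upwards [hsmul, coeFn_finset_sum F (fun g => U hinv g (ContinuousMap.toLp 2 μ ℝ f)),
    hall] with x hx1 hx2 hx3
  show (A hinv F (ContinuousMap.toLp 2 μ ℝ f)) x = _
  rw [A, hx1, Pi.smul_apply, hx2, smul_eq_mul]
  congr 1
  exact Finset.sum_congr rfl fun g hg => hx3 g (Finset.mem_coe.mpr hg)

lemma integral_sq_eq (v : Lp ℝ 2 μ) (h : X → ℝ) (hh : h =ᵐ[μ] ⇑v) :
    ∫ x, (h x)^2 ∂μ = ‖v‖^2 := by
  have h1 : ∫ x, (h x)^2 ∂μ = ∫ x, v x * v x ∂μ := by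
    refine integral_congr_ae ?_
    filter_upwards [hh] with x hx
    rw [hx, pow_two]
  rw [h1, ← inner_eq_integral, real_inner_self_eq_norm_sq]

end U

end QuasiGenericAux


open QuasiGenericAux

/-- A point with dense orbit in a compact metric `G`-system is quasi-generic for every
ergodic invariant Borel probability measure: there is a left Følner sequence along
which the orbital averages at the point converge to the integral, for every continuous
function. -/
theorem dense_orbit_quasi_generic {G : Type*} [Group G] [Countable G] [DecidableEq G]
    (hamen : ∃ F : ℕ → Finset G, IsFolner F)
    {X : Type*} [MetricSpace X] [CompactSpace X] [MeasurableSpace X] [BorelSpace X]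
    (T : G → X → X) (hcont : ∀ g, Continuous (T g))
    (hact : ∀ g g' x, T (g * g') x = T g (T g' x)) (hid : ∀ x, T 1 x = x)
    (x₀ : X) (hdense : Dense {x | ∃ g : G, T g x₀ = x})
    (μ : Measure X) [IsProbabilityMeasure μ]
    (hinv : ∀ g, MeasurePreserving (T g) μ μ)
    (herg : ∀ s : Set X, MeasurableSet s → (∀ g, T g ⁻¹' s = s) → μ s = 0 ∨ μ s = 1) :
    ∃ F : ℕ → Finset G, IsFolner F ∧
      ∀ f : C(X, ℝ), Tendsto (fun N => (∑ g ∈ F N, f (T g x₀)) / ((F N).card : ℝ))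
        atTop (𝓝 (∫ x, f x ∂μ)) := by
  classical
  obtain ⟨F, hF⟩ := hamen
  set u : ℕ → C(X, ℝ) := TopologicalSpace.denseSeq C(X, ℝ) with hu
  have hdseq : DenseRange u := TopologicalSpace.denseRange_denseSeq C(X, ℝ)
  set c : ℕ → ℝ := fun k => ∫ x, u k x ∂μ with hcdef
  set δ : ℕ → ℝ := fun j => ((j:ℝ)+1)⁻¹ with hδ
  have hδpos : ∀ j, 0 < δ j := fun j => by positivity
  have hδle : ∀ j, δ j ≤ 1 := by
    intro j
    rw [hδ]
    have h1 : (1:ℝ) ≤ (j:ℝ)+1 := by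
      have := Nat.cast_nonneg (α := ℝ) j
      linarith
    exact inv_le_one_of_one_le₀ h1
  have hδanti : Antitone δ := by
    intro i j hij
    have h1 : (0:ℝ) < (i:ℝ)+1 := by positivity
    have h2 : ((i:ℝ)+1) ≤ ((j:ℝ)+1) := by
      have : (i:ℝ) ≤ (j:ℝ) := by exact_mod_cast hij
      linarith
    exact inv_anti₀ h1 h2
  -- mean ergodic theorem for each element of the dense sequence
  have hmet : ∀ k, Tendsto (fun N =>
      ‖A hinv (F N) (ContinuousMap.toLp 2 μ ℝ (u k)) - c k • oneL μ‖) atTop (𝓝 0) := by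
    intro k
    have h1 := met hinv hcont hact hid herg hF (ContinuousMap.toLp 2 μ ℝ (u k))
    have h2 : (inner ℝ (oneL μ) (ContinuousMap.toLp 2 μ ℝ (u k)) : ℝ) = c k := by
      rw [real_inner_comm, inner_oneL_right]
      exact integral_congr_ae (ContinuousMap.coeFn_toLp (𝕜 := ℝ) μ (u k))
    rw [h2] at h1
    rw [← tendsto_sub_nhds_zero_iff] at h1
    exact tendsto_zero_iff_norm_tendsto_zero.mp h1
  -- choice of good times
  have hchoice : ∀ j : ℕ, ∃ N, j ≤ N ∧ ∀ k ∈ Finset.range (j+1),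
      ‖A hinv (F N) (ContinuousMap.toLp 2 μ ℝ (u k)) - c k • oneL μ‖ < δ j ^ 2 := by
    intro j
    have hev : ∀ᶠ N in atTop, ∀ k ∈ Finset.range (j+1),
        ‖A hinv (F N) (ContinuousMap.toLp 2 μ ℝ (u k)) - c k • oneL μ‖ < δ j ^ 2 := by
      rw [eventually_all_finset]
      intro k _
      exact (hmet k).eventually (gt_mem_nhds (by positivity))
    obtain ⟨Nj, h1, h2⟩ := ((eventually_ge_atTop j).and hev).exists
    exact ⟨Nj, h1, h2⟩
  choose N hNge hNlt using hchoice
  set avg : ℕ → ℕ → X → ℝ :=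
    fun k j x => (((F (N j)).card : ℝ))⁻¹ * ∑ s ∈ F (N j), u k (T s x) with havg
  have havgcont : ∀ k j, Continuous (avg k j) := fun k j =>
    continuous_const.mul (continuous_finset_sum _ fun s _ => (u k).continuous.comp (hcont s))
  have hvk : ∀ k j, (fun x => avg k j x - c k) =ᵐ[μ]
      ⇑(A hinv (F (N j)) (ContinuousMap.toLp 2 μ ℝ (u k)) - c k • oneL μ) := by
    intro k j
    have h1 := A_toLp_coeFn hinv (u k) (F (N j))
    have h2 := Lp.coeFn_sub (A hinv (F (N j)) (ContinuousMap.toLp 2 μ ℝ (u k))) (c k • oneL μ)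
    have h3 := Lp.coeFn_smul (c k) (oneL μ)
    filter_upwards [h1, h2, h3, oneL_coeFn (μ := μ)] with x hx1 hx2 hx3 hx4
    rw [hx2, Pi.sub_apply, hx1, hx3, Pi.smul_apply, hx4, smul_eq_mul, mul_one]
  -- existence of a good point
  have hpoint : ∀ j, ∃ y : X, ∀ k ∈ Finset.range (j+1), |avg k j y - c k| < δ j := by
    intro j
    by_contra hcon
    push_neg at hcon
    have hlower : ∀ y : X, (δ j)^2 ≤ ∑ k ∈ Finset.range (j+1), (avg k j y - c k)^2 := by
      intro y
      obtain ⟨k, hk, hge⟩ := hcon y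
      have h1 : (δ j)^2 ≤ (avg k j y - c k)^2 := by
        have h2 : (δ j)^2 ≤ |avg k j y - c k|^2 := pow_le_pow_left₀ (hδpos j).le hge 2
        rwa [sq_abs] at h2
      exact h1.trans (Finset.single_le_sum (f := fun i => (avg i j y - c i)^2) (fun i _ => sq_nonneg _) hk)
    have hint : ∀ k, Integrable (fun x => (avg k j x - c k)^2) μ := fun k =>
      (((havgcont k j).sub continuous_const).pow 2).integrable_of_hasCompactSupport
        (HasCompactSupport.of_compactSpace _)
    have hle : (δ j)^2 ≤ ∫ x, ∑ k ∈ Finset.range (j+1), (avg k j x - c k)^2 ∂μ := by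
      have hconst : (δ j)^2 = ∫ _x, (δ j)^2 ∂μ := by simp
      rw [hconst]
      exact integral_mono (integrable_const _) (integrable_finset_sum _ fun k _ => hint k) hlower
    have heq : ∫ x, ∑ k ∈ Finset.range (j+1), (avg k j x - c k)^2 ∂μ
        = ∑ k ∈ Finset.range (j+1),
          ‖A hinv (F (N j)) (ContinuousMap.toLp 2 μ ℝ (u k)) - c k • oneL μ‖^2 := by
      rw [integral_finset_sum _ fun k _ => hint k]
      exact Finset.sum_congr rfl fun k _ => integral_sq_eq _ _ (hvk k j)
    have hub : ∑ k ∈ Finset.range (j+1),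
        ‖A hinv (F (N j)) (ContinuousMap.toLp 2 μ ℝ (u k)) - c k • oneL μ‖^2 < (δ j)^2 := by
      have hbound : ∀ k ∈ Finset.range (j+1),
          ‖A hinv (F (N j)) (ContinuousMap.toLp 2 μ ℝ (u k)) - c k • oneL μ‖^2 < (δ j)^3 := by
        intro k hk
        have h := hNlt j k hk
        have h4 : ‖A hinv (F (N j)) (ContinuousMap.toLp 2 μ ℝ (u k)) - c k • oneL μ‖^2
            < (δ j^2)^2 := by
          exact pow_lt_pow_left₀ h (norm_nonneg _) (by norm_num : (2:ℕ) ≠ 0)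
        calc ‖A hinv (F (N j)) (ContinuousMap.toLp 2 μ ℝ (u k)) - c k • oneL μ‖^2
            < (δ j^2)^2 := h4
          _ = (δ j)^3 * δ j := by ring
          _ ≤ (δ j)^3 * 1 := by
              refine mul_le_mul_of_nonneg_left (hδle j) (by positivity)
          _ = (δ j)^3 := by ring
      have hne : (Finset.range (j+1)).Nonempty := Finset.nonempty_range_iff.mpr (Nat.succ_ne_zero j)
      calc ∑ k ∈ Finset.range (j+1),
          ‖A hinv (F (N j)) (ContinuousMap.toLp 2 μ ℝ (u k)) - c k • oneL μ‖^2
          < ∑ _k ∈ Finset.range (j+1), (δ j)^3 := Finset.sum_lt_sum_of_nonempty hne hbound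
        _ = ((j:ℝ)+1) * (δ j)^3 := by
            rw [Finset.sum_const, Finset.card_range, nsmul_eq_mul]
            push_cast
            ring
        _ = (δ j)^2 := by
            have hinv1 : ((j:ℝ)+1) * δ j = 1 := mul_inv_cancel₀ (by positivity)
            calc ((j:ℝ)+1) * (δ j)^3 = (((j:ℝ)+1) * δ j) * (δ j)^2 := by ring
              _ = (δ j)^2 := by rw [hinv1, one_mul]
    rw [heq] at hle
    linarith
  choose y hy using hpoint
  -- transfer to the orbit by openness and density
  have hgex : ∀ j, ∃ gj : G, ∀ k ∈ Finset.range (j+1), |avg k j (T gj x₀) - c k| < δ j := by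
    intro j
    have hOopen : IsOpen {x : X | ∀ k ∈ Finset.range (j+1), |avg k j x - c k| < δ j} := by
      have hrw : {x : X | ∀ k ∈ Finset.range (j+1), |avg k j x - c k| < δ j}
          = ⋂ k ∈ Finset.range (j+1), {x : X | |avg k j x - c k| < δ j} := by
        ext x; simp
      rw [hrw]
      refine isOpen_biInter_finset fun k _ => ?_
      exact isOpen_lt (((havgcont k j).sub continuous_const).abs) continuous_const
    obtain ⟨x, hxorb, hxO⟩ := hdense.exists_mem_open hOopen ⟨y j, hy j⟩
    obtain ⟨gj, rfl⟩ := hxorb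
    exact ⟨gj, hxO⟩
  choose g hg using hgex
  refine ⟨fun j => (F (N j)).image (fun x => x * g j), ⟨fun j => (hF.1 (N j)).image _, ?_⟩, ?_⟩
  · -- Følner property of the translated sequence
    intro h
    have key : ∀ j, (((((F (N j)).image (fun x => x * g j))).image (fun x => h * x)) ∆
        ((F (N j)).image (fun x => x * g j))).card
        = (((F (N j)).image (fun x => h * x)) ∆ (F (N j))).card := by
      intro j
      have h1 : ((F (N j)).image (fun x => x * g j)).image (fun x => h * x)
          = ((F (N j)).image (fun x => h * x)).image (fun x => x * g j) := by
        rw [Finset.image_image, Finset.image_image]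
        congr 1
        funext x
        show h * (x * g j) = (h * x) * g j
        rw [mul_assoc]
      rw [h1, ← Finset.image_symmDiff _ _ (mul_left_injective (g j)),
        Finset.card_image_of_injective _ (mul_left_injective (g j))]
    have hcard : ∀ j, (((F (N j)).image (fun x => x * g j)).card : ℝ)
        = ((F (N j)).card : ℝ) := fun j => by
      rw [Finset.card_image_of_injective _ (mul_left_injective (g j))]
    have htendN : Tendsto N atTop atTop := tendsto_atTop_mono hNge tendsto_id
    have := (hF.2 h).comp htendN
    refine this.congr fun j => ?_
    rw [Function.comp_apply]
    rw [key j, hcard j]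
  · -- convergence of averages
    intro f
    -- first for the dense sequence
    have htransfer : ∀ k j, (∑ s ∈ (F (N j)).image (fun x => x * g j), (u k) (T s x₀)) /
        ((((F (N j)).image (fun x => x * g j)).card : ℝ)) = avg k j (T (g j) x₀) := by
      intro k j
      rw [Finset.sum_image (fun a _ b _ hab => mul_right_cancel hab),
        Finset.card_image_of_injective _ (mul_left_injective (g j))]
      rw [havg]
      rw [div_eq_inv_mul]
      congr 1
      refine Finset.sum_congr rfl fun s _ => ?_
      rw [hact]
    have hconvk : ∀ k, Tendsto (fun j =>
        (∑ s ∈ (F (N j)).image (fun x => x * g j), (u k) (T s x₀)) /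
        ((((F (N j)).image (fun x => x * g j)).card : ℝ))) atTop (𝓝 (c k)) := by
      intro k
      rw [Metric.tendsto_atTop]
      intro ε hε
      obtain ⟨j₀, hj₀⟩ := exists_nat_gt (ε⁻¹)
      refine ⟨max k j₀, fun j hj => ?_⟩
      have hk : k ∈ Finset.range (j+1) := Finset.mem_range.mpr
        (Nat.lt_succ_of_le (le_trans (le_max_left _ _) hj))
      have h1 : |avg k j (T (g j) x₀) - c k| < δ j := hg j k hk
      have h2 : δ j ≤ δ j₀ := hδanti (le_trans (le_max_right _ _) hj)
      have h3 : δ j₀ < ε := by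
        rw [hδ]
        have hεpos : (0:ℝ) < ε⁻¹ := by positivity
        have h4 : ε⁻¹ < (j₀:ℝ) + 1 := by
          have : ε⁻¹ < (j₀:ℝ) := hj₀
          linarith
        calc ((j₀:ℝ)+1)⁻¹ < (ε⁻¹)⁻¹ := by
              refine (inv_lt_inv₀ (by positivity) hεpos).mpr h4
          _ = ε := inv_inv ε
      rw [Real.dist_eq, htransfer k j]
      linarith
    -- now approximate a general f
    rw [Metric.tendsto_atTop]
    intro ε hε
    obtain ⟨k, hk⟩ := hdseq.exists_dist_lt f (show (0:ℝ) < ε/4 by linarith)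
    obtain ⟨j₁, hj₁⟩ := Metric.tendsto_atTop.mp (hconvk k) (ε/4) (by linarith)
    refine ⟨j₁, fun j hj => ?_⟩
    set Fj := (F (N j)).image (fun x => x * g j) with hFj
    have hFjne : Fj.Nonempty := (hF.1 (N j)).image _
    have hcardpos : (0:ℝ) < (Fj.card : ℝ) := by exact_mod_cast Finset.card_pos.mpr hFjne
    have hbound1 : |(∑ s ∈ Fj, f (T s x₀)) / (Fj.card:ℝ) -
        (∑ s ∈ Fj, (u k) (T s x₀)) / (Fj.card:ℝ)| ≤ dist f (u k) := by
      rw [div_sub_div_same, ← Finset.sum_sub_distrib]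
      rw [abs_div, abs_of_pos hcardpos]
      rw [div_le_iff₀ hcardpos]
      calc |∑ s ∈ Fj, (f (T s x₀) - (u k) (T s x₀))|
          ≤ ∑ s ∈ Fj, |f (T s x₀) - (u k) (T s x₀)| := Finset.abs_sum_le_sum_abs _ _
        _ ≤ ∑ _s ∈ Fj, dist f (u k) := by
            refine Finset.sum_le_sum fun s _ => ?_
            rw [← Real.dist_eq]
            exact ContinuousMap.dist_apply_le_dist _
        _ = dist f (u k) * (Fj.card:ℝ) := by
            rw [Finset.sum_const, nsmul_eq_mul]; ring
    have hbound3 : |c k - ∫ x, f x ∂μ| ≤ dist f (u k) := by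
      rw [hcdef]
      have hint1 : Integrable (fun x => (u k) x) μ :=
        (u k).continuous.integrable_of_hasCompactSupport (HasCompactSupport.of_compactSpace _)
      have hint2 : Integrable (fun x => f x) μ :=
        f.continuous.integrable_of_hasCompactSupport (HasCompactSupport.of_compactSpace _)
      rw [← integral_sub hint1 hint2]
      have := norm_integral_le_of_norm_le_const (μ := μ)
        (C := dist f (u k)) (f := fun x => (u k) x - f x) ?_
      · simpa using this
      · refine Filter.Eventually.of_forall fun x => ?_
        rw [Real.norm_eq_abs, abs_sub_comm, ← Real.dist_eq]
        exact ContinuousMap.dist_apply_le_dist _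
    have h2 := hj₁ j hj
    rw [Real.dist_eq] at h2 ⊢
    have habs : |(∑ s ∈ Fj, f (T s x₀)) / (Fj.card:ℝ) - ∫ x, f x ∂μ| ≤
        |(∑ s ∈ Fj, f (T s x₀)) / (Fj.card:ℝ) - (∑ s ∈ Fj, (u k) (T s x₀)) / (Fj.card:ℝ)| +
        |(∑ s ∈ Fj, (u k) (T s x₀)) / (Fj.card:ℝ) - c k| + |c k - ∫ x, f x ∂μ| := by
      have := abs_sub_le ((∑ s ∈ Fj, f (T s x₀)) / (Fj.card:ℝ))
        ((∑ s ∈ Fj, (u k) (T s x₀)) / (Fj.card:ℝ)) (∫ x, f x ∂μ)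
      have h5 := abs_sub_le ((∑ s ∈ Fj, (u k) (T s x₀)) / (Fj.card:ℝ)) (c k) (∫ x, f x ∂μ)
      linarith
    calc |(∑ s ∈ Fj, f (T s x₀)) / (Fj.card:ℝ) - ∫ x, f x ∂μ| ≤ _ := habs
      _ < ε/4 + ε/4 + ε/4 := by
          exact add_lt_add (add_lt_add (hbound1.trans_lt hk) h2) (hbound3.trans_lt hk)
      _ < ε := by linarith

-- axiom check
end

section
/- For commuting measure-preserving actions T₁, T₂ of an amenable group G on a probability space (X, μ) with invariant σ-algebras I₁, I₂ and I_{12} (the σ-algebra of sets invariant under the diagonal action g ↦ T₁^g T₂^g), the σ-algebras I₁ and I_{12} are relatively independent over I₁ ∧ I₂: for all f₁ ∈ L^∞(I₁) and f₁₂ ∈ L^∞(I_{12}), E(f₁ f₁₂ | I₁ ∧ I₂) = E(f₁ | I₁ ∧ I₂) E(f₁₂ | I₁ ∧ I₂). In particular E(f₁ f₁₂ | I₁ ∧ I₂) = E(f₁|I₂) E(f₁₂|I₁) when these are I₁∧I₂-measurable. -/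
open MeasureTheory Filter Topology
open scoped symmDiff

/-- The σ-algebra of sets invariant under an action `T : G → X → X`. -/
def invariantSigma {G X : Type*} [MeasurableSpace X] (T : G → X → X) : MeasurableSpace X where
  MeasurableSet' s := MeasurableSet s ∧ ∀ g, T g ⁻¹' s = s
  measurableSet_empty := ⟨MeasurableSet.empty, fun g => by simp⟩
  measurableSet_compl s hs := ⟨hs.1.compl, fun g => by
    rw [Set.preimage_compl, hs.2 g]⟩
  measurableSet_iUnion f hf := ⟨MeasurableSet.iUnion (fun n => (hf n).1), fun g => by
    simp only [Set.preimage_iUnion]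
    exact Set.iUnion_congr fun n => (hf n).2 g⟩


section Aux

variable {G X : Type*} [m0 : MeasurableSpace X]

lemma invariantSigma_le (T : G → X → X) : invariantSigma T ≤ m0 := fun _ hs => hs.1

lemma apply_eq_of_measurable_invariantSigma {T : G → X → X} {f : X → ℝ}
    (hf : Measurable[invariantSigma T] f) (g : G) (x : X) : f (T g x) = f x := by
  have hs : MeasurableSet[invariantSigma T] (f ⁻¹' {f x}) := hf (measurableSet_singleton _)
  have h2 := hs.2 g
  have hx : x ∈ T g ⁻¹' (f ⁻¹' {f x}) := by rw [h2]; exact rfl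
  exact hx

lemma measurable_invariantSigma {T : G → X → X} {f : X → ℝ} (hf : Measurable f)
    (hinv : ∀ g x, f (T g x) = f x) : Measurable[invariantSigma T] f := by
  intro s hs
  refine ⟨hf hs, fun g => ?_⟩
  ext x
  simp [Set.mem_preimage, hinv g x]

lemma countable_of_folner {G : Type*} [Group G] [DecidableEq G] {F : ℕ → Finset G}
    (hF : IsFolner F) : Countable G := by
  have key : ∀ g : G, ∃ N, ∃ x ∈ F N, ∃ y ∈ F N, g = y * x⁻¹ := by
    intro g
    by_contra hcon
    push_neg at hcon
    have h2 : ∀ N, (((((F N).image (fun x => g * x))) ∆ (F N)).card : ℝ) / (F N).card = 2 := by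
      intro N
      have hdisj : Disjoint ((F N).image (fun x => g * x)) (F N) := by
        rw [Finset.disjoint_left]
        intro a ha haF
        obtain ⟨x, hx, rfl⟩ := Finset.mem_image.1 ha
        exact hcon N x hx (g * x) haF (by group)
      have hcard : ((((F N).image (fun x => g * x))) ∆ (F N)).card = 2 * (F N).card := by
        rw [hdisj.symmDiff_eq_sup]
        show ((F N).image (fun x => g * x) ∪ F N).card = 2 * (F N).card
        rw [Finset.card_union_of_disjoint hdisj,
          Finset.card_image_of_injective _ (mul_right_injective g)]
        ring
      have hpos : 0 < ((F N).card : ℝ) := by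
        exact_mod_cast Finset.card_pos.2 (hF.1 N)
      rw [hcard]
      push_cast
      field_simp
    have htend : Tendsto (fun _ : ℕ => (2 : ℝ)) atTop (𝓝 0) := by
      have := hF.2 g
      simpa only [h2] using this
    exact absurd (tendsto_nhds_unique htend tendsto_const_nhds) (by norm_num)
  rw [← Set.countable_univ_iff]
  have hcnt : (⋃ N : ℕ, (fun p : G × G => p.2 * p.1⁻¹) '' ((F N : Set G) ×ˢ (F N : Set G))).Countable :=
    Set.countable_iUnion fun N =>
      (((F N).finite_toSet.prod (F N).finite_toSet).image _).countable
  refine Set.Countable.mono (fun g _ => ?_) hcnt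
  obtain ⟨N, x, hx, y, hy, rfl⟩ := key g
  exact Set.mem_iUnion.2 ⟨N, ⟨(x, y), ⟨hx, hy⟩, rfl⟩⟩

end Aux

/-- Conditional expectation commutes with composition by an invertible measure-preserving
map that preserves the sub-σ-algebra `m`. -/
lemma condexp_comp_of_measurePreserving {X : Type*} {m m0 : MeasurableSpace X}
    {μ : Measure X} [IsProbabilityMeasure μ] (hm : m ≤ m0)
    {φ ψ : X → X} (hφ : MeasurePreserving φ μ μ) (hψφ : ∀ x, ψ (φ x) = x)
    (hφm : ∀ s, MeasurableSet[m] s → MeasurableSet[m] (φ ⁻¹' s))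
    (hψm : ∀ s, MeasurableSet[m] s → MeasurableSet[m] (ψ ⁻¹' s))
    {f : X → ℝ} (hf : Integrable f μ) :
    (fun x => (μ[f|m]) (φ x)) =ᵐ[μ] μ[fun x => f (φ x)|m] := by
  have hfφ : Integrable (fun x => f (φ x)) μ :=
    (hφ.integrable_comp hf.aestronglyMeasurable).2 hf
  have hkey : ∀ u : X → ℝ, Integrable u μ → ∀ s : Set X, MeasurableSet[m] s →
      ∫ x in s, u (φ x) ∂μ = ∫ x in ψ ⁻¹' s, u x ∂μ := by
    intro u hu s hs
    have hts : φ ⁻¹' (ψ ⁻¹' s) = s := by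
      ext x; simp [Set.mem_preimage, hψφ x]
    have ht0 : MeasurableSet (ψ ⁻¹' s) := hm _ (hψm s hs)
    have hmap := setIntegral_map (μ := μ) (g := φ) (f := u) ht0
      (by rw [hφ.map_eq]; exact hu.aestronglyMeasurable) hφ.measurable.aemeasurable
    rw [hφ.map_eq] at hmap
    rw [hmap, hts]
  refine ae_eq_condExp_of_forall_setIntegral_eq hm hfφ ?_ ?_ ?_
  · intro s _ _
    exact ((hφ.integrable_comp (integrable_condExp).aestronglyMeasurable).2
      integrable_condExp).integrableOn
  · intro s hs _
    rw [hkey _ integrable_condExp s hs, hkey f hf s hs,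
      setIntegral_condExp hm hf (hψm s hs)]
  · have hsm : StronglyMeasurable[m] (μ[f|m]) := stronglyMeasurable_condExp
    have hφmm : @Measurable X X m m φ := fun s hs => hφm s hs
    exact StronglyMeasurable.aestronglyMeasurable (hsm.comp_measurable hφmm)

/-- From a function exactly invariant under `T₁` and a.e. invariant under each `T₂ g`
(with `G` countable), produce an exactly `T₁`- and `T₂`-invariant version. -/
lemma exists_invariant_version {G X : Type*} [Group G] [Countable G]
    {m0 : MeasurableSpace X} {μ : Measure X} {T₁ T₂ : G → X → X}
    (h2meas : ∀ g, Measurable (T₂ g))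
    (hact2 : ∀ g g' x, T₂ (g * g') x = T₂ g (T₂ g' x)) (hid2 : ∀ x, T₂ 1 x = x)
    (hcomm : ∀ g g' x, T₁ g (T₂ g' x) = T₂ g' (T₁ g x))
    {u : X → ℝ} (hu : Measurable u)
    (hinv1 : ∀ g x, u (T₁ g x) = u x)
    (hinv2 : ∀ g : G, (fun x => u (T₂ g x)) =ᵐ[μ] u) :
    ∃ u' : X → ℝ, Measurable[invariantSigma T₁ ⊓ invariantSigma T₂] u' ∧ u' =ᵐ[μ] u := by
  classical
  set A : Set X := {x | ∀ g, u (T₂ g x) = u x} with hA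
  have hT2inv : ∀ g x, T₂ g⁻¹ (T₂ g x) = x := fun g x => by
    rw [← hact2, inv_mul_cancel, hid2]
  have hAmeas : MeasurableSet A := by
    have : A = ⋂ g, {x | u (T₂ g x) = u x} := by ext x; simp [hA, Set.mem_iInter]
    rw [this]
    exact MeasurableSet.iInter fun g => measurableSet_eq_fun (hu.comp (h2meas g)) hu
  have hAae : ∀ᵐ x ∂μ, x ∈ A := ae_all_iff.2 fun g => hinv2 g
  have fwd : ∀ (g : G) (x : X), x ∈ A → T₂ g x ∈ A := by
    intro g x hx g'
    show u (T₂ g' (T₂ g x)) = u (T₂ g x)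
    rw [← hact2, hx (g' * g), hx g]
  have hA2 : ∀ g x, T₂ g x ∈ A ↔ x ∈ A := by
    intro g x
    refine ⟨fun h => ?_, fwd g x⟩
    have := fwd g⁻¹ _ h
    rwa [hT2inv g x] at this
  have hA1 : ∀ g x, T₁ g x ∈ A ↔ x ∈ A := by
    intro g x
    constructor
    · intro h g'
      have := h g'
      rwa [← hcomm g g' x, hinv1 g, hinv1 g] at this
    · intro h g'
      show u (T₂ g' (T₁ g x)) = u (T₁ g x)
      rw [← hcomm g g' x, hinv1 g, hinv1 g]
      exact h g'
  refine ⟨A.indicator u, ?_, ?_⟩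
  · have hmeas' : Measurable (A.indicator u) := hu.indicator hAmeas
    have hi1 : ∀ g x, A.indicator u (T₁ g x) = A.indicator u x := by
      intro g x
      by_cases hx : x ∈ A
      · rw [Set.indicator_of_mem ((hA1 g x).2 hx), Set.indicator_of_mem hx, hinv1]
      · rw [Set.indicator_of_notMem (fun h => hx ((hA1 g x).1 h)),
          Set.indicator_of_notMem hx]
    have hi2 : ∀ g x, A.indicator u (T₂ g x) = A.indicator u x := by
      intro g x
      by_cases hx : x ∈ A
      · rw [Set.indicator_of_mem ((hA2 g x).2 hx), Set.indicator_of_mem hx, hx g]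
      · rw [Set.indicator_of_notMem (fun h => hx ((hA2 g x).1 h)),
          Set.indicator_of_notMem hx]
    intro s hs
    exact MeasurableSpace.measurableSet_inf.2
      ⟨measurable_invariantSigma hmeas' hi1 hs, measurable_invariantSigma hmeas' hi2 hs⟩
  · filter_upwards [hAae] with x hx
    exact Set.indicator_of_mem hx u

/-- If the conditional expectation `μ[f | I₁]` is a.e. invariant under each `T₂ g`, then it
agrees a.e. with the conditional expectation on the intersected σ-algebra. -/
lemma condexp_inf_of_ae_invariant {G X : Type*} [Group G] [Countable G]
    {m0 : MeasurableSpace X} {μ : Measure X} [IsProbabilityMeasure μ] {T₁ T₂ : G → X → X}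
    (h2meas : ∀ g, Measurable (T₂ g))
    (hact2 : ∀ g g' x, T₂ (g * g') x = T₂ g (T₂ g' x)) (hid2 : ∀ x, T₂ 1 x = x)
    (hcomm : ∀ g g' x, T₁ g (T₂ g' x) = T₂ g' (T₁ g x))
    {f : X → ℝ}
    (hae2 : ∀ g : G, (fun x => (μ[f|invariantSigma T₁]) (T₂ g x)) =ᵐ[μ]
      μ[f|invariantSigma T₁]) :
    μ[f|invariantSigma T₁ ⊓ invariantSigma T₂] =ᵐ[μ] μ[f|invariantSigma T₁] := by
  set u : X → ℝ := μ[f|invariantSigma T₁] with hu_def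
  have hum : Measurable[invariantSigma T₁] u := stronglyMeasurable_condExp.measurable
  have hu : Measurable u := (stronglyMeasurable_condExp.mono (invariantSigma_le T₁)).measurable
  have hinv1 : ∀ g x, u (T₁ g x) = u x := fun g x =>
    apply_eq_of_measurable_invariantSigma hum g x
  obtain ⟨u', hu'm, hu'ae⟩ := exists_invariant_version h2meas hact2 hid2 hcomm hu hinv1 hae2
  have hle : invariantSigma T₁ ⊓ invariantSigma T₂ ≤ m0 :=
    le_trans inf_le_left (invariantSigma_le T₁)
  have h1 : μ[u|invariantSigma T₁ ⊓ invariantSigma T₂] =ᵐ[μ]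
      μ[f|invariantSigma T₁ ⊓ invariantSigma T₂] :=
    condExp_condExp_of_le inf_le_left (invariantSigma_le T₁)
  have h2 : μ[u|invariantSigma T₁ ⊓ invariantSigma T₂] =ᵐ[μ] u := by
    refine condExp_of_aestronglyMeasurable' hle ⟨u', ?_, hu'ae.symm⟩ integrable_condExp
    exact hu'm.stronglyMeasurable
  exact (h1.symm.trans h2 : _)

/-- For commuting measure-preserving actions `T₁, T₂` of an amenable group, the
invariant σ-algebra `I₁` of `T₁` and the invariant σ-algebra `I₁₂` of the diagonal
action `g ↦ T₁^g T₂^g` are relatively independent over `I₁ ⊓ I₂`: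
`E(f₁ f₁₂ | I₁ ⊓ I₂) = E(f₁ | I₁ ⊓ I₂) E(f₁₂ | I₁ ⊓ I₂)` a.e.; moreover this equals
`E(f₁|I₂) E(f₁₂|I₁)` a.e. -/
theorem invariant_sigma_diag_rel_indep {G : Type*} [Group G] [DecidableEq G]
    (hamen : ∃ F : ℕ → Finset G, IsFolner F)
    {X : Type*} [MeasurableSpace X] (μ : Measure X) [IsProbabilityMeasure μ]
    (T₁ T₂ : G → X → X)
    (h1 : ∀ g, MeasurePreserving (T₁ g) μ μ) (h2 : ∀ g, MeasurePreserving (T₂ g) μ μ)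
    (hact1 : ∀ g g' x, T₁ (g * g') x = T₁ g (T₁ g' x))
    (hact2 : ∀ g g' x, T₂ (g * g') x = T₂ g (T₂ g' x))
    (hid1 : ∀ x, T₁ 1 x = x) (hid2 : ∀ x, T₂ 1 x = x)
    (hcomm : ∀ g g' x, T₁ g (T₂ g' x) = T₂ g' (T₁ g x))
    (f₁ f₁₂ : X → ℝ)
    (hf₁ : Measurable[invariantSigma T₁] f₁)
    (hf₁₂ : Measurable[invariantSigma (fun g x => T₁ g (T₂ g x))] f₁₂)
    (hb₁ : ∃ C, ∀ x, |f₁ x| ≤ C) (hb₁₂ : ∃ C, ∀ x, |f₁₂ x| ≤ C) :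
    (MeasureTheory.condExp (invariantSigma T₁ ⊓ invariantSigma T₂) μ (fun x => f₁ x * f₁₂ x)
      =ᵐ[μ] fun x =>
        (MeasureTheory.condExp (invariantSigma T₁ ⊓ invariantSigma T₂) μ f₁ x) *
        (MeasureTheory.condExp (invariantSigma T₁ ⊓ invariantSigma T₂) μ f₁₂ x)) ∧
    (MeasureTheory.condExp (invariantSigma T₁ ⊓ invariantSigma T₂) μ (fun x => f₁ x * f₁₂ x)
      =ᵐ[μ] fun x =>
        (MeasureTheory.condExp (invariantSigma T₂) μ f₁ x) *
        (MeasureTheory.condExp (invariantSigma T₁) μ f₁₂ x)) := by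
  
  obtain ⟨F, hF⟩ := hamen
  haveI : Countable G := countable_of_folner hF
  -- basic invariances
  have hT1inv : ∀ g x, T₁ g⁻¹ (T₁ g x) = x := fun g x => by
    rw [← hact1, inv_mul_cancel, hid1]
  have hT1inv' : ∀ g x, T₁ g (T₁ g⁻¹ x) = x := fun g x => by
    rw [← hact1, mul_inv_cancel, hid1]
  have hT2inv : ∀ g x, T₂ g⁻¹ (T₂ g x) = x := fun g x => by
    rw [← hact2, inv_mul_cancel, hid2]
  have hT2inv' : ∀ g x, T₂ g (T₂ g⁻¹ x) = x := fun g x => by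
    rw [← hact2, mul_inv_cancel, hid2]
  have hf₁inv : ∀ g x, f₁ (T₁ g x) = f₁ x := fun g x =>
    apply_eq_of_measurable_invariantSigma hf₁ g x
  have hSinv : ∀ g x, f₁₂ (T₁ g (T₂ g x)) = f₁₂ x := fun g x =>
    apply_eq_of_measurable_invariantSigma hf₁₂ g x
  have hf₁₂T₂ : ∀ g x, f₁₂ (T₂ g x) = f₁₂ (T₁ g⁻¹ x) := by
    intro g x
    have h := hSinv g⁻¹ (T₂ g x)
    rw [hT2inv g x] at h
    exact h.symm
  -- preimage stability of the invariant σ-algebras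
  have p11 : ∀ (g : G) s, MeasurableSet[invariantSigma T₁] s →
      MeasurableSet[invariantSigma T₁] (T₁ g ⁻¹' s) := by
    intro g s hs; rw [hs.2 g]; exact hs
  have p22 : ∀ (g : G) s, MeasurableSet[invariantSigma T₂] s →
      MeasurableSet[invariantSigma T₂] (T₂ g ⁻¹' s) := by
    intro g s hs; rw [hs.2 g]; exact hs
  have p21 : ∀ (g : G) s, MeasurableSet[invariantSigma T₁] s →
      MeasurableSet[invariantSigma T₁] (T₂ g ⁻¹' s) := by
    intro g s hs
    refine ⟨(h2 g).measurable hs.1, fun g' => ?_⟩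
    have hpre : T₁ g' ⁻¹' (T₂ g ⁻¹' s) = T₂ g ⁻¹' (T₁ g' ⁻¹' s) := by
      ext x
      simp only [Set.mem_preimage]
      rw [hcomm g' g x]
    rw [hpre, hs.2 g']
  have p12 : ∀ (g : G) s, MeasurableSet[invariantSigma T₂] s →
      MeasurableSet[invariantSigma T₂] (T₁ g ⁻¹' s) := by
    intro g s hs
    refine ⟨(h1 g).measurable hs.1, fun g' => ?_⟩
    have hpre : T₂ g' ⁻¹' (T₁ g ⁻¹' s) = T₁ g ⁻¹' (T₂ g' ⁻¹' s) := by
      ext x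
      simp only [Set.mem_preimage]
      rw [← hcomm g g' x]
    rw [hpre, hs.2 g']
  -- measurability and integrability
  have mf₁ : Measurable f₁ := hf₁.mono (invariantSigma_le T₁) le_rfl
  have mf₁₂ : Measurable f₁₂ := hf₁₂.mono (invariantSigma_le _) le_rfl
  have int_of_bdd : ∀ {f : X → ℝ}, Measurable f → (∃ C, ∀ x, |f x| ≤ C) → Integrable f μ := by
    rintro f hf ⟨C, hC⟩
    refine ⟨hf.aestronglyMeasurable, HasFiniteIntegral.of_bounded (C := C) ?_⟩
    exact Eventually.of_forall fun x => by simpa [Real.norm_eq_abs] using hC x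
  have intf₁ : Integrable f₁ μ := int_of_bdd mf₁ hb₁
  have intf₁₂ : Integrable f₁₂ μ := int_of_bdd mf₁₂ hb₁₂
  obtain ⟨C₁, hC₁⟩ := hb₁
  have hb₁' : ∃ C, ∀ x, ‖f₁ x‖ ≤ C := ⟨C₁, fun x => by simpa [Real.norm_eq_abs] using hC₁ x⟩
  have intmul : Integrable (f₁ * f₁₂) μ := intf₁₂.bdd_mul mf₁.aestronglyMeasurable (ae_of_all _ hb₁'.choose_spec)
  -- a.e. invariance of μ[f₁₂ | I₁] under T₂
  have hum : Measurable[invariantSigma T₁] (μ[f₁₂|invariantSigma T₁]) :=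
    stronglyMeasurable_condExp.measurable
  have huinv : ∀ g x, (μ[f₁₂|invariantSigma T₁]) (T₁ g x) = (μ[f₁₂|invariantSigma T₁]) x :=
    fun g x => apply_eq_of_measurable_invariantSigma hum g x
  have hae12 : ∀ g : G, (fun x => (μ[f₁₂|invariantSigma T₁]) (T₂ g x)) =ᵐ[μ]
      μ[f₁₂|invariantSigma T₁] := by
    intro g
    have e1 := condexp_comp_of_measurePreserving (invariantSigma_le T₁) (h2 g)
      (hT2inv g) (p21 g) (p21 g⁻¹) intf₁₂
    have e2 : (fun x => f₁₂ (T₂ g x)) = fun x => f₁₂ (T₁ g⁻¹ x) :=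
      funext fun x => hf₁₂T₂ g x
    have e3 := condexp_comp_of_measurePreserving (invariantSigma_le T₁) (h1 g⁻¹)
      (hT1inv' g) (p11 g⁻¹) (p11 g) intf₁₂
    have e4 : (fun x => (μ[f₁₂|invariantSigma T₁]) (T₁ g⁻¹ x)) = μ[f₁₂|invariantSigma T₁] :=
      funext fun x => huinv g⁻¹ x
    calc (fun x => (μ[f₁₂|invariantSigma T₁]) (T₂ g x))
        =ᵐ[μ] μ[fun x => f₁₂ (T₂ g x)|invariantSigma T₁] := e1
      _ = μ[fun x => f₁₂ (T₁ g⁻¹ x)|invariantSigma T₁] := by rw [e2]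
      _ =ᵐ[μ] (fun x => (μ[f₁₂|invariantSigma T₁]) (T₁ g⁻¹ x)) := e3.symm
      _ = μ[f₁₂|invariantSigma T₁] := e4
  -- a.e. invariance of μ[f₁ | I₂] under T₁
  have hae1 : ∀ g : G, (fun x => (μ[f₁|invariantSigma T₂]) (T₁ g x)) =ᵐ[μ]
      μ[f₁|invariantSigma T₂] := by
    intro g
    have e1 := condexp_comp_of_measurePreserving (invariantSigma_le T₂) (h1 g)
      (hT1inv g) (p12 g) (p12 g⁻¹) intf₁
    have e2 : (fun x => f₁ (T₁ g x)) = f₁ := funext fun x => hf₁inv g x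
    rw [e2] at e1
    exact e1
  -- the two key identifications of conditional expectations
  have hC1 : μ[f₁₂|invariantSigma T₁ ⊓ invariantSigma T₂] =ᵐ[μ] μ[f₁₂|invariantSigma T₁] :=
    condexp_inf_of_ae_invariant (fun g => (h2 g).measurable) hact2 hid2 hcomm hae12
  have hC2 : μ[f₁|invariantSigma T₁ ⊓ invariantSigma T₂] =ᵐ[μ] μ[f₁|invariantSigma T₂] := by
    have h := condexp_inf_of_ae_invariant (T₁ := T₂) (T₂ := T₁)
      (fun g => (h1 g).measurable) hact1 hid1 (fun g g' x => (hcomm g' g x).symm) hae1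
    rwa [inf_comm (invariantSigma T₂) (invariantSigma T₁)] at h
  -- pull-out at I₁
  have sf₁ : StronglyMeasurable[invariantSigma T₁] f₁ := by
    exact @Measurable.stronglyMeasurable X ℝ f₁ (invariantSigma T₁) _ _ _ _ _ hf₁
  have step1 : μ[f₁ * f₁₂|invariantSigma T₁] =ᵐ[μ] f₁ * μ[f₁₂|invariantSigma T₁] :=
    condExp_mul_of_stronglyMeasurable_left sf₁ intmul intf₁₂
  -- tower
  have step2 : μ[μ[f₁ * f₁₂|invariantSigma T₁]|invariantSigma T₁ ⊓ invariantSigma T₂]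
      =ᵐ[μ] μ[f₁ * f₁₂|invariantSigma T₁ ⊓ invariantSigma T₂] :=
    condExp_condExp_of_le inf_le_left (invariantSigma_le T₁)
  -- replace μ[f₁₂|I₁] by μ[f₁₂|I] inside
  have hrepl : f₁ * μ[f₁₂|invariantSigma T₁] =ᵐ[μ]
      (μ[f₁₂|invariantSigma T₁ ⊓ invariantSigma T₂]) * f₁ := by
    filter_upwards [hC1] with x hx
    simp only [Pi.mul_apply]
    rw [hx, mul_comm]
  have step3 : μ[μ[f₁ * f₁₂|invariantSigma T₁]|invariantSigma T₁ ⊓ invariantSigma T₂]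
      =ᵐ[μ] μ[(μ[f₁₂|invariantSigma T₁ ⊓ invariantSigma T₂]) * f₁|
        invariantSigma T₁ ⊓ invariantSigma T₂] :=
    condExp_congr_ae (step1.trans hrepl)
  -- pull-out at I
  have intown : Integrable ((μ[f₁₂|invariantSigma T₁ ⊓ invariantSigma T₂]) * f₁) μ := by
    have h : Integrable (fun x => f₁ x *
        (μ[f₁₂|invariantSigma T₁ ⊓ invariantSigma T₂]) x) μ :=
      integrable_condExp.bdd_mul mf₁.aestronglyMeasurable (ae_of_all _ hb₁'.choose_spec)
    exact h.congr (Eventually.of_forall fun x => mul_comm _ _)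
  have step4 : μ[(μ[f₁₂|invariantSigma T₁ ⊓ invariantSigma T₂]) * f₁|
      invariantSigma T₁ ⊓ invariantSigma T₂] =ᵐ[μ]
      (μ[f₁₂|invariantSigma T₁ ⊓ invariantSigma T₂]) *
        μ[f₁|invariantSigma T₁ ⊓ invariantSigma T₂] :=
    condExp_mul_of_stronglyMeasurable_left stronglyMeasurable_condExp intown intf₁
  have main : μ[f₁ * f₁₂|invariantSigma T₁ ⊓ invariantSigma T₂] =ᵐ[μ]
      (μ[f₁₂|invariantSigma T₁ ⊓ invariantSigma T₂]) *
        μ[f₁|invariantSigma T₁ ⊓ invariantSigma T₂] :=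
    (step2.symm.trans step3).trans step4
  have hfun : (fun x => f₁ x * f₁₂ x) = f₁ * f₁₂ := rfl
  constructor
  · rw [hfun]
    filter_upwards [main] with x hx
    rw [hx]
    simp only [Pi.mul_apply]
    ring
  · rw [hfun]
    filter_upwards [main, hC1, hC2] with x hx h1x h2x
    rw [hx]
    simp only [Pi.mul_apply]
    rw [h1x, h2x]
    ring
end
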